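/- For every real number t with 0 < t ≤ 1 and every λ ∈ [0,1], we have (1-λ)t + λ ≤ t^{1-λ} · exp( λ(1-λ)(1 - 1/t)² ). -/

import Mathlib

lemma stmt_4_aux (lam : ℝ) (h0 : 0 ≤ lam) (h1 : lam ≤ 1) (t : ℝ) (ht0 : 0 < t) (ht1 : t ≤ 1) :
    Real.log ((1 - lam) * t + lam) ≤ (1 - lam) * Real.log t + lam * (1 - lam) * (1 - 1 / t) ^ 2 := by
  set G : ℝ → ℝ := fun y => (1 - lam) * Real.log y + lam * (1 - lam) * (1 - 1 / y) ^ 2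
      - Real.log ((1 - lam) * y + lam) with hG
  have hdpos : ∀ x : ℝ, 0 < x → 0 < (1 - lam) * x + lam := by
    intro x hx
    rcases lt_or_eq_of_le h1 with h | h
    · have : 0 < (1 - lam) * x := mul_pos (by linarith) hx
      linarith
    · rw [h]; norm_num
  have hder : ∀ x : ℝ, 0 < x → HasDerivAt G
      ((1 - lam) * x⁻¹ + lam * (1 - lam) * (2 * (1 - 1 / x) * x⁻¹ ^ 2)
        - (1 - lam) / ((1 - lam) * x + lam)) x := by
    intro x hx
    have hx0 : x ≠ 0 := hx.ne'
    have h1' : HasDerivAt (fun y : ℝ => (1 - lam) * Real.log y) ((1 - lam) * x⁻¹) x :=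
      (Real.hasDerivAt_log hx0).const_mul (1 - lam)
    have h2' : HasDerivAt (fun y : ℝ => (1 - 1 / y)) (x⁻¹ ^ 2) x := by
      have := (hasDerivAt_inv hx0).const_sub 1
      simpa [one_div, inv_pow] using this
    have h2 : HasDerivAt (fun y : ℝ => lam * (1 - lam) * (1 - 1 / y) ^ 2)
        (lam * (1 - lam) * (2 * (1 - 1 / x) * x⁻¹ ^ 2)) x := by
      have := (h2'.fun_pow 2).const_mul (lam * (1 - lam))
      refine this.congr_deriv ?_
      ring
    have h3 : HasDerivAt (fun y : ℝ => Real.log ((1 - lam) * y + lam))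
        ((1 - lam) / ((1 - lam) * x + lam)) x := by
      have hlin : HasDerivAt (fun y : ℝ => (1 - lam) * y + lam) (1 - lam) x := by
        simpa using ((hasDerivAt_id x).const_mul (1 - lam)).add_const lam
      exact hlin.log (hdpos x hx).ne'
    exact (h1'.add h2).sub h3
  have hanti : AntitoneOn G (Set.Ioc (0 : ℝ) 1) := by
    apply antitoneOn_of_deriv_nonpos (convex_Ioc 0 1)
    · intro x hx
      exact ((hder x hx.1).continuousAt).continuousWithinAt
    · intro x hx
      rw [interior_Ioc] at hx
      exact (hder x hx.1).differentiableAt.differentiableWithinAt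
    · intro x hx
      rw [interior_Ioc] at hx
      obtain ⟨hx0, hx1⟩ := hx
      rw [(hder x hx0).deriv]
      have hd := hdpos x hx0
      have hx0' : x ≠ 0 := hx0.ne'
      have heq : (1 - lam) * x⁻¹ + lam * (1 - lam) * (2 * (1 - 1 / x) * x⁻¹ ^ 2)
          - (1 - lam) / ((1 - lam) * x + lam)
          = lam * (1 - lam) * (1 - x) * (x ^ 2 - 2 * ((1 - lam) * x + lam))
            / (x ^ 3 * ((1 - lam) * x + lam)) := by
        field_simp
        ring
      rw [heq]
      apply div_nonpos_of_nonpos_of_nonneg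
      · have hnum : 0 ≤ lam * (1 - lam) * (1 - x) := by
          apply mul_nonneg (mul_nonneg h0 (by linarith)) (by linarith)
        have hx2 : x ^ 2 - 2 * ((1 - lam) * x + lam) ≤ 0 := by
          nlinarith [sq_nonneg x, sq_nonneg (1 - x)]
        exact mul_nonpos_of_nonneg_of_nonpos hnum hx2
      · positivity
  have hG1 : G 1 = 0 := by simp [hG]
  have := hanti ⟨ht0, ht1⟩ ⟨one_pos, le_refl 1⟩ ht1
  rw [hG1] at this
  simp only [hG] at this
  linarith

/-- For every real `t` with `0 < t ≤ 1` and every `λ ∈ [0,1]`: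
`(1-λ)t + λ ≤ t^(1-λ) · exp(λ(1-λ)(1 - 1/t)²)`. -/
theorem stmt_4 (t lam : ℝ) (ht0 : 0 < t) (ht1 : t ≤ 1) (hlam : lam ∈ Set.Icc (0 : ℝ) 1) :
    (1 - lam) * t + lam ≤ t ^ (1 - lam) * Real.exp (lam * (1 - lam) * (1 - 1 / t) ^ 2) := by
  obtain ⟨h0, h1⟩ := hlam
  have key := stmt_4_aux lam h0 h1 t ht0 ht1
  have hdpos : 0 < (1 - lam) * t + lam := by
    rcases lt_or_eq_of_le h1 with h | h
    · nlinarith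
    · subst h; norm_num
  calc (1 - lam) * t + lam = Real.exp (Real.log ((1 - lam) * t + lam)) :=
        (Real.exp_log hdpos).symm
    _ ≤ Real.exp ((1 - lam) * Real.log t + lam * (1 - lam) * (1 - 1 / t) ^ 2) :=
        Real.exp_le_exp.mpr key
    _ = t ^ (1 - lam) * Real.exp (lam * (1 - lam) * (1 - 1 / t) ^ 2) := by
        rw [Real.exp_add, Real.rpow_def_of_pos ht0, mul_comm (Real.log t)]
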